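/- Let χ be a nontrivial additive character of F_q, j ∈ F_q^*, and define for each x ∈ F_q^d the quantity T(x) = Σ_{m ∈ N_0} χ(-m·x) (q-1)^{-(d-1)} Σ_{y ∈ H_j} χ(m·y), where N_0 is the set of m with all coordinates nonzero. Then |T(x)| ≤ (q-1)^{-(d-1)} Σ_{z ∈ F_q^d} |Σ_{m ∈ N_0} χ(m·z)| ≤ 2^d q^d / (q-1)^{d-1}, hence |T(x)| ≤ C·q for a constant C depending only on d. -/

import Mathlib

open Finset

section TBoundAux

variable {F : Type} [Field F] [Fintype F] [DecidableEq F]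

lemma addChar_map_sum (χ : AddChar F ℂ) {ι : Type*} (s : Finset ι) (f : ι → F) :
    χ (∑ i ∈ s, f i) = ∏ i ∈ s, χ (f i) := by
  induction s using Finset.cons_induction with
  | empty => simp
  | cons a s ha ih => rw [sum_cons, prod_cons, AddChar.map_add_eq_mul, ih]

lemma S_abs_le (χ : AddChar F ℂ) (hχ : χ ≠ 1) (z : F) :
    ‖∑ t ∈ univ.filter (fun t : F => t ≠ 0), χ (t * z)‖
      ≤ if z = 0 then (Fintype.card F : ℝ) - 1 else 1 := by
  rcases eq_or_ne z 0 with rfl | hz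
  · rw [if_pos rfl]
    simp only [mul_zero, AddChar.map_zero_eq_one, sum_const, nsmul_eq_mul, mul_one]
    rw [filter_ne', card_erase_of_mem (mem_univ _), card_univ, Complex.norm_natCast]
    have h1 : 1 ≤ Fintype.card F := Fintype.card_pos
    rw [Nat.cast_sub h1]
    push_cast
    linarith [le_refl ((Fintype.card F : ℝ) - 1)]
  · rw [if_neg hz]
    have hsum : ∑ t : F, χ (t * z) = 0 := by
      have h1 : (χ.mulShift z) ≠ 1 := by
        rw [Ne, AddChar.mulShift_unit_eq_one_iff _ (isUnit_iff_ne_zero.2 hz)]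
        exact hχ
      calc ∑ t : F, χ (t * z) = ∑ t : F, (χ.mulShift z) t := by
            refine Finset.sum_congr rfl fun t _ => ?_
            rw [AddChar.mulShift_apply, mul_comm]
        _ = 0 := AddChar.sum_eq_zero_of_ne_one h1
    have h2 : ∑ t ∈ univ.filter (fun t : F => t ≠ 0), χ (t * z)
        = (∑ t : F, χ (t * z)) - χ (0 * z) := by
      rw [filter_ne', Finset.sum_erase_eq_sub (mem_univ _)]
    rw [h2, hsum, zero_mul, AddChar.map_zero_eq_one, zero_sub, norm_neg, norm_one]

end TBoundAux

/-- For `T(x) = ∑_{m ∈ N_0} χ(-m·x) (q-1)^{-(d-1)} ∑_{y ∈ H_j} χ(m·y)`, we have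
`|T(x)| ≤ 2^d q^d / (q-1)^{d-1}`, hence `|T(x)| ≤ C q` for a constant `C`
depending only on `d`. -/
theorem T_bound (d : ℕ) (hd : 1 ≤ d) :
    ∃ C : ℝ, 0 < C ∧
      ∀ (F : Type) [Field F] [Fintype F] [DecidableEq F],
        ∀ (χ : AddChar F ℂ), χ ≠ 1 →
        ∀ j : F, j ≠ 0 →
        ∀ x : Fin d → F,
          ‖(∑ m ∈ Finset.univ.filter (fun m : Fin d → F => ∀ i, m i ≠ 0),
              χ (-∑ i, m i * x i) * ((((Fintype.card F : ℂ) - 1) ^ (d - 1))⁻¹ *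
                ∑ y ∈ Finset.univ.filter (fun y : Fin d → F => ∏ i, y i = j),
                  χ (∑ i, m i * y i)))‖
            ≤ 2 ^ d * (Fintype.card F : ℝ) ^ d / ((Fintype.card F : ℝ) - 1) ^ (d - 1)
          ∧
          ‖(∑ m ∈ Finset.univ.filter (fun m : Fin d → F => ∀ i, m i ≠ 0),
              χ (-∑ i, m i * x i) * ((((Fintype.card F : ℂ) - 1) ^ (d - 1))⁻¹ *
                ∑ y ∈ Finset.univ.filter (fun y : Fin d → F => ∏ i, y i = j),
                  χ (∑ i, m i * y i)))‖
            ≤ C * Fintype.card F := by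
  refine ⟨4 ^ d, by positivity, ?_⟩
  intro F _ _ _ χ hχ j hj x
  have hq2 : 2 ≤ Fintype.card F := Fintype.one_lt_card
  have hq2R : (2:ℝ) ≤ (Fintype.card F : ℝ) := by exact_mod_cast hq2
  have hq1pos : (0:ℝ) < (Fintype.card F : ℝ) - 1 := by linarith
  have hqpos : (0:ℝ) < (Fintype.card F : ℝ) := by linarith
  set H : Finset (Fin d → F) := Finset.univ.filter (fun y : Fin d → F => ∏ i, y i = j)
    with hH
  set N0 : Finset (Fin d → F) := Finset.univ.filter (fun m : Fin d → F => ∀ i, m i ≠ 0)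
    with hN0def
  have hN0 : N0 = Fintype.piFinset (fun _ : Fin d => univ.filter (fun t : F => t ≠ 0)) := by
    ext m
    simp [hN0def, Fintype.mem_piFinset]
  set c : ℂ := (((Fintype.card F : ℂ) - 1) ^ (d - 1))⁻¹ with hc
  have key : (∑ m ∈ N0, χ (-∑ i, m i * x i) * (c * ∑ y ∈ H, χ (∑ i, m i * y i)))
      = c * ∑ y ∈ H, ∏ i, ∑ t ∈ univ.filter (fun t : F => t ≠ 0), χ (t * (y i - x i)) := by
    have step1 : ∀ m ∈ N0, χ (-∑ i, m i * x i) * (c * ∑ y ∈ H, χ (∑ i, m i * y i))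
        = c * ∑ y ∈ H, χ (∑ i, m i * (y i - x i)) := by
      intro m _
      rw [mul_left_comm]
      congr 1
      rw [Finset.mul_sum]
      refine Finset.sum_congr rfl fun y _ => ?_
      rw [← AddChar.map_add_eq_mul]
      congr 1
      simp only [mul_sub, Finset.sum_sub_distrib]
      ring
    rw [Finset.sum_congr rfl step1, ← Finset.mul_sum, Finset.sum_comm]
    congr 1
    refine Finset.sum_congr rfl fun y _ => ?_
    calc ∑ m ∈ N0, χ (∑ i, m i * (y i - x i))
        = ∑ m ∈ N0, ∏ i, χ (m i * (y i - x i)) :=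
          Finset.sum_congr rfl fun m _ => addChar_map_sum χ _ _
      _ = ∏ i, ∑ t ∈ univ.filter (fun t : F => t ≠ 0), χ (t * (y i - x i)) := by
          rw [hN0]
          exact (Finset.prod_univ_sum (fun _ : Fin d => univ.filter (fun t : F => t ≠ 0))
            (fun i t => χ (t * (y i - x i)))).symm
  rw [key]
  -- Step 2: the absolute value bound
  have habsc : ‖c‖ = (((Fintype.card F : ℝ) - 1) ^ (d - 1))⁻¹ := by
    rw [hc, norm_inv, norm_pow]
    congr 2
    rw [show ((Fintype.card F : ℂ) - 1) = (((Fintype.card F : ℝ) - 1 : ℝ) : ℂ) by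
      push_cast; ring]
    rw [Complex.norm_real, Real.norm_of_nonneg hq1pos.le]
  have hw : ∀ y ∈ H, ‖∏ i, ∑ t ∈ univ.filter (fun t : F => t ≠ 0),
        χ (t * (y i - x i))‖
      ≤ ∏ i, (if y i - x i = 0 then (Fintype.card F : ℝ) - 1 else 1) := by
    intro y _
    rw [norm_prod]
    refine Finset.prod_le_prod (fun i _ => norm_nonneg _) fun i _ =>
      S_abs_le χ hχ _
  have hbig : ∑ y ∈ H, ∏ i, (if y i - x i = 0 then (Fintype.card F : ℝ) - 1 else 1)
      ≤ (2 * ((Fintype.card F : ℝ) - 1)) ^ d := by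
    calc ∑ y ∈ H, ∏ i, (if y i - x i = 0 then (Fintype.card F : ℝ) - 1 else 1)
        ≤ ∑ y : Fin d → F, ∏ i, (if y i - x i = 0 then (Fintype.card F : ℝ) - 1 else 1) := by
          refine Finset.sum_le_sum_of_subset_of_nonneg (Finset.filter_subset _ _)
            fun y _ _ => ?_
          refine Finset.prod_nonneg fun i _ => ?_
          split <;> linarith
      _ = ∏ i : Fin d, ∑ t : F, (if t - x i = 0 then (Fintype.card F : ℝ) - 1 else 1) := by
          rw [show (Finset.univ : Finset (Fin d → F))
              = Fintype.piFinset (fun _ : Fin d => (univ : Finset F)) by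
            simp]
          exact (Finset.prod_univ_sum (fun _ : Fin d => (univ : Finset F))
            (fun i t => if t - x i = 0 then (Fintype.card F : ℝ) - 1 else 1)).symm
      _ = ∏ i : Fin d, (2 * ((Fintype.card F : ℝ) - 1)) := by
          refine Finset.prod_congr rfl fun i _ => ?_
          have hsplit : ∀ t : F, (if t - x i = 0 then (Fintype.card F : ℝ) - 1 else 1)
              = (if t = x i then (Fintype.card F : ℝ) - 2 else 0) + 1 := by
            intro t
            simp only [sub_eq_zero]
            split <;> ring
          rw [Finset.sum_congr rfl fun t _ => hsplit t, Finset.sum_add_distrib,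
            Finset.sum_ite_eq' univ (x i) (fun _ => (Fintype.card F : ℝ) - 2),
            if_pos (mem_univ _), Finset.sum_const, card_univ, nsmul_eq_mul, mul_one]
          ring
      _ = (2 * ((Fintype.card F : ℝ) - 1)) ^ d := by
          rw [Finset.prod_const, card_univ, Fintype.card_fin]
  have h1 : ‖c * ∑ y ∈ H, ∏ i, ∑ t ∈ univ.filter (fun t : F => t ≠ 0),
        χ (t * (y i - x i))‖
      ≤ 2 ^ d * (Fintype.card F : ℝ) ^ d / ((Fintype.card F : ℝ) - 1) ^ (d - 1) := by
    rw [norm_mul, habsc]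
    calc (((Fintype.card F : ℝ) - 1) ^ (d - 1))⁻¹ *
          ‖∑ y ∈ H, ∏ i, ∑ t ∈ univ.filter (fun t : F => t ≠ 0),
            χ (t * (y i - x i))‖
        ≤ (((Fintype.card F : ℝ) - 1) ^ (d - 1))⁻¹ * (2 * ((Fintype.card F : ℝ) - 1)) ^ d := by
          refine mul_le_mul_of_nonneg_left ?_ (by positivity)
          exact ((norm_sum_le _ _).trans (Finset.sum_le_sum hw)).trans hbig
      _ = (2 * ((Fintype.card F : ℝ) - 1)) ^ d / ((Fintype.card F : ℝ) - 1) ^ (d - 1) := by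
          rw [inv_mul_eq_div]
      _ ≤ 2 ^ d * (Fintype.card F : ℝ) ^ d / ((Fintype.card F : ℝ) - 1) ^ (d - 1) := by
          gcongr
          rw [mul_pow]
          gcongr
          linarith
  refine ⟨h1, h1.trans ?_⟩
  -- Step 3: the arithmetic bound by C * q
  rw [div_le_iff₀ (by positivity : (0:ℝ) < ((Fintype.card F : ℝ) - 1) ^ (d - 1))]
  have hqd : (Fintype.card F : ℝ) ^ d = (Fintype.card F : ℝ) ^ (d - 1) * Fintype.card F := by
    rw [← pow_succ, Nat.sub_add_cancel hd]
  have hqle : (Fintype.card F : ℝ) ^ (d - 1) ≤ (2 * ((Fintype.card F : ℝ) - 1)) ^ (d - 1) := by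
    have h : (Fintype.card F : ℝ) ≤ 2 * ((Fintype.card F : ℝ) - 1) := by linarith
    exact pow_le_pow_left₀ hqpos.le h _
  calc (2:ℝ) ^ d * (Fintype.card F : ℝ) ^ d
      = 2 ^ d * ((Fintype.card F : ℝ) ^ (d - 1) * Fintype.card F) := by rw [hqd]
    _ ≤ 2 ^ d * ((2 * ((Fintype.card F : ℝ) - 1)) ^ (d - 1) * Fintype.card F) := by
        gcongr
    _ = (2 ^ d * 2 ^ (d - 1)) * ((Fintype.card F : ℝ) * ((Fintype.card F : ℝ) - 1) ^ (d - 1)) := by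
        rw [mul_pow]; ring
    _ ≤ 4 ^ d * ((Fintype.card F : ℝ) * ((Fintype.card F : ℝ) - 1) ^ (d - 1)) := by
        have h2 : (2:ℝ) ^ d * 2 ^ (d - 1) ≤ 4 ^ d := by
          rw [← pow_add]
          calc (2:ℝ) ^ (d + (d - 1)) ≤ 2 ^ (2 * d) := by
                apply pow_le_pow_right₀ (by norm_num)
                omega
            _ = 4 ^ d := by rw [pow_mul]; norm_num
        have hpos : (0:ℝ) ≤ (Fintype.card F : ℝ) * ((Fintype.card F : ℝ) - 1) ^ (d - 1) := by
          positivity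
        exact mul_le_mul_of_nonneg_right h2 hpos
    _ = 4 ^ d * (Fintype.card F : ℝ) * ((Fintype.card F : ℝ) - 1) ^ (d - 1) := by ring
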